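/- A geodesic net in the Euclidean plane with at most two unbalanced vertices has no balanced vertices. -/

import Mathlib

open scoped Classical

section Aux

private lemma euclid_ext2 (x y : EuclideanSpace ℝ (Fin 2)) (h0 : x 0 = y 0) (h1 : x 1 = y 1) :
    x = y := PiLp.ext fun i => by fin_cases i <;> assumption

end Aux
/-- A geodesic net in the Euclidean plane: a finite connected graph embedded in `ℝ²`
whose edges are straight segments between distinct vertices, such that no vertex lies
in the interior of an edge and the interiors of distinct edges are disjoint. -/
structure GeodesicNet where
  verts : Finset (EuclideanSpace ℝ (Fin 2))
  Adj : EuclideanSpace ℝ (Fin 2) → EuclideanSpace ℝ (Fin 2) → Prop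
  symm : ∀ u v, Adj u v → Adj v u
  loopless : ∀ v, ¬Adj v v
  mem_of_adj : ∀ u v, Adj u v → u ∈ verts ∧ v ∈ verts
  nonempty : verts.Nonempty
  connected : ∀ u ∈ verts, ∀ v ∈ verts, Relation.ReflTransGen Adj u v
  no_vertex_inside : ∀ u v, Adj u v → ∀ w ∈ verts, w ∉ openSegment ℝ u v
  edges_disjoint : ∀ u v x y, Adj u v → Adj x y →
    ({u, v} : Set (EuclideanSpace ℝ (Fin 2))) ≠ {x, y} →
    openSegment ℝ u v ∩ openSegment ℝ x y = ∅

namespace GeodesicNet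

variable (G : GeodesicNet)

/-- The neighbours of a vertex, as a finset. -/
noncomputable def nbhd (v : EuclideanSpace ℝ (Fin 2)) : Finset (EuclideanSpace ℝ (Fin 2)) :=
  G.verts.filter fun u => G.Adj v u

/-- The unit vector at `v` pointing towards `u`. -/
noncomputable def dir (_G : GeodesicNet) (v u : EuclideanSpace ℝ (Fin 2)) : EuclideanSpace ℝ (Fin 2) :=
  ‖u - v‖⁻¹ • (u - v)

/-- A vertex is balanced if it has degree at least `3` and the unit vectors along the
incident edges (directed away from the vertex) sum to zero. -/
noncomputable def Balanced (v : EuclideanSpace ℝ (Fin 2)) : Prop :=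
  v ∈ G.verts ∧ 3 ≤ (G.nbhd v).card ∧ ∑ u ∈ G.nbhd v, G.dir v u = 0

/-- A vertex is unbalanced if it is a vertex of the net and is not balanced. -/
noncomputable def Unbalanced (v : EuclideanSpace ℝ (Fin 2)) : Prop :=
  v ∈ G.verts ∧ ¬G.Balanced v

end GeodesicNet

/-- If all neighbours of `v` lie on a line through `v`, then `v` has at most two
neighbours. -/
private lemma nbhd_card_le_two (G : GeodesicNet) (v : EuclideanSpace ℝ (Fin 2)) (a b : ℝ)
    (hab : ¬(a = 0 ∧ b = 0))
    (hlin : ∀ u ∈ G.nbhd v, a * (u 0 - v 0) + b * (u 1 - v 1) = 0) :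
    (G.nbhd v).card ≤ 2 := by
  have hmemn : ∀ u ∈ G.nbhd v, u ∈ G.verts ∧ G.Adj v u := by
    intro u hu
    simpa [GeodesicNet.nbhd] using hu
  set t : EuclideanSpace ℝ (Fin 2) → ℝ :=
    fun u => if b = 0 then -(u 1 - v 1) / a else (u 0 - v 0) / b with ht
  -- coordinates of neighbours in terms of `t`
  have hcoord : ∀ u ∈ G.nbhd v, u 0 - v 0 = t u * b ∧ u 1 - v 1 = -(t u * a) := by
    intro u hu
    have he := hlin u hu
    by_cases hb : b = 0
    · have ha : a ≠ 0 := fun h => hab ⟨h, hb⟩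
      have h0 : u 0 - v 0 = 0 := by
        have : a * (u 0 - v 0) = 0 := by rw [hb] at he; linarith
        exact (mul_eq_zero.mp this).resolve_left ha
      constructor
      · simp [ht, hb, h0]
      · simp only [ht, hb, if_pos]
        field_simp
    · constructor
      · simp only [ht, if_neg hb]; field_simp
      · simp only [ht, if_neg hb]
        field_simp
        nlinarith [he]
  have htne : ∀ u ∈ G.nbhd v, t u ≠ 0 := by
    intro u hu ht0
    obtain ⟨h0, h1⟩ := hcoord u hu
    rw [ht0] at h0 h1
    have : u = v := euclid_ext2 u v (by linarith) (by linarith)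
    exact G.loopless v (this ▸ (hmemn u hu).2)
  -- key geometric step: no two neighbours on the same ray
  have key : ∀ u ∈ G.nbhd v, ∀ u' ∈ G.nbhd v,
      0 < t u / t u' → t u / t u' < 1 → False := by
    intro u hu u' hu' hr0 hr1
    obtain ⟨h0, h1⟩ := hcoord u hu
    obtain ⟨h0', h1'⟩ := hcoord u' hu'
    have htu' : t u' ≠ 0 := htne u' hu'
    have hseg : u ∈ openSegment ℝ v u' := by
      rw [openSegment_eq_image' ℝ v u']
      refine ⟨t u / t u', ⟨hr0, hr1⟩, ?_⟩
      refine euclid_ext2 _ _ ?_ ?_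
      · show v 0 + t u / t u' * (u' 0 - v 0) = u 0
        rw [h0']
        have hc : t u / t u' * (t u' * b) = t u * b := by field_simp
        rw [hc]; linarith [h0]
      · show v 1 + t u / t u' * (u' 1 - v 1) = u 1
        rw [h1']
        have hc : t u / t u' * -(t u' * a) = -(t u * a) := by field_simp
        rw [hc]; linarith [h1]
    exact G.no_vertex_inside v u' (hmemn u' hu').2 u (hmemn u hu).1 hseg
  -- the sign map is injective on the neighbourhood
  have hinj : Set.InjOn (fun u => decide (0 < t u)) (G.nbhd v) := by
    intro u hu u' hu' hσ
    by_contra hne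
    replace hu : u ∈ G.nbhd v := Finset.mem_coe.mp hu
    replace hu' : u' ∈ G.nbhd v := Finset.mem_coe.mp hu'
    simp only [decide_eq_decide] at hσ
    have htu : t u ≠ 0 := htne u hu
    have htu' : t u' ≠ 0 := htne u' hu'
    have hsign : (0 < t u ∧ 0 < t u') ∨ (t u < 0 ∧ t u' < 0) := by
      rcases lt_or_gt_of_ne htu with hneg | hpos
      · refine Or.inr ⟨hneg, ?_⟩
        rcases lt_or_gt_of_ne htu' with h | h
        · exact h
        · exact absurd (hσ.mpr h) (not_lt.mpr hneg.le)
      · exact Or.inl ⟨hpos, hσ.mp hpos⟩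
    have hr0 : 0 < t u / t u' := div_pos_iff.mpr hsign
    have hr0' : 0 < t u' / t u := div_pos_iff.mpr (hsign.imp (fun h => ⟨h.2, h.1⟩) (fun h => ⟨h.2, h.1⟩))
    have httne : t u ≠ t u' := by
      intro hteq
      obtain ⟨h0, h1⟩ := hcoord u hu
      obtain ⟨h0', h1'⟩ := hcoord u' hu'
      exact hne (euclid_ext2 u u' (by rw [hteq] at h0; linarith) (by rw [hteq] at h1; linarith))
    have hrne : t u / t u' ≠ 1 := by
      intro h1
      exact httne (by field_simp at h1; linarith)
    have hprod : (t u / t u') * (t u' / t u) = 1 := by field_simp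
    rcases lt_or_gt_of_ne hrne with h | h
    · exact (key u hu u' hu' hr0 h).elim
    · have hlt : t u' / t u < 1 := by nlinarith
      exact (key u' hu' u hu hr0' hlt).elim
  have := Finset.card_le_card_of_injOn (fun u => decide (0 < t u))
    (fun a _ => Finset.mem_univ _) hinj
  simpa using this

/-- A vertex maximizing a nonzero linear functional over the vertices is not balanced. -/
private lemma not_balanced_of_max (G : GeodesicNet) (v : EuclideanSpace ℝ (Fin 2)) (a b : ℝ)
    (hab : ¬(a = 0 ∧ b = 0))
    (hmax : ∀ u ∈ G.verts, a * u 0 + b * u 1 ≤ a * v 0 + b * v 1) :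
    ¬G.Balanced v := by
  rintro ⟨hv, hcard, hsum⟩
  have hmemn : ∀ u ∈ G.nbhd v, u ∈ G.verts ∧ G.Adj v u := by
    intro u hu
    simpa [GeodesicNet.nbhd] using hu
  have h0 : ∑ u ∈ G.nbhd v, ‖u - v‖⁻¹ * (u 0 - v 0) = 0 := by
    have := congrArg (fun x => x 0) hsum
    rw [WithLp.ofLp_sum, Finset.sum_apply] at this
    simpa [GeodesicNet.dir] using this
  have h1 : ∑ u ∈ G.nbhd v, ‖u - v‖⁻¹ * (u 1 - v 1) = 0 := by
    have := congrArg (fun x => x 1) hsum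
    rw [WithLp.ofLp_sum, Finset.sum_apply] at this
    simpa [GeodesicNet.dir] using this
  have hT : ∑ u ∈ G.nbhd v, ‖u - v‖⁻¹ * (a * (u 0 - v 0) + b * (u 1 - v 1)) = 0 := by
    have : ∀ u ∈ G.nbhd v, ‖u - v‖⁻¹ * (a * (u 0 - v 0) + b * (u 1 - v 1))
        = a * (‖u - v‖⁻¹ * (u 0 - v 0)) + b * (‖u - v‖⁻¹ * (u 1 - v 1)) := by
      intro u _; ring
    rw [Finset.sum_congr rfl this, Finset.sum_add_distrib, ← Finset.mul_sum, ← Finset.mul_sum,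
      h0, h1]
    ring
  have hnonpos : ∀ u ∈ G.nbhd v, ‖u - v‖⁻¹ * (a * (u 0 - v 0) + b * (u 1 - v 1)) ≤ 0 := by
    intro u hu
    have hle : a * u 0 + b * u 1 ≤ a * v 0 + b * v 1 := hmax u (hmemn u hu).1
    have : a * (u 0 - v 0) + b * (u 1 - v 1) ≤ 0 := by linarith
    exact mul_nonpos_of_nonneg_of_nonpos (inv_nonneg.mpr (norm_nonneg _)) this
  have hzero : ∀ u ∈ G.nbhd v, a * (u 0 - v 0) + b * (u 1 - v 1) = 0 := by
    intro u hu
    have heach := (Finset.sum_eq_zero_iff_of_nonpos hnonpos).mp hT u hu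
    have hune : u ≠ v := by
      intro h
      exact G.loopless v (h ▸ (hmemn u hu).2)
    have hpos : 0 < ‖u - v‖⁻¹ := by
      rw [inv_pos, norm_pos_iff]
      exact sub_ne_zero.mpr hune
    have := mul_eq_zero.mp heach
    rcases this with h | h
    · exact absurd h (ne_of_gt hpos)
    · exact h
  have := nbhd_card_le_two G v a b hab hzero
  omega

/-- a geodesic net in the Euclidean plane with at most two unbalanced
vertices has no balanced vertices. -/
theorem no_balanced_of_le_two_unbalanced
    (G : GeodesicNet) (h : ({u | G.Unbalanced u} : Set (EuclideanSpace ℝ (Fin 2))).ncard ≤ 2) :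
    ∀ v, ¬G.Balanced v := by
  intro v hB
  obtain ⟨hv, hcard, hsum⟩ := hB
  have hmemn : ∀ u ∈ G.nbhd v, u ∈ G.verts ∧ G.Adj v u := by
    intro u hu
    simpa [GeodesicNet.nbhd] using hu
  by_cases hc : ∀ u ∈ G.verts, ∀ u' ∈ G.verts, u 0 = u' 0
  · -- all vertices have the same first coordinate
    have := nbhd_card_le_two G v 1 0 (by simp) ?_
    · omega
    · intro u hu
      have := hc u (hmemn u hu).1 v hv
      simp [this]
  · push_neg at hc
    obtain ⟨w, hw, w', hw', hww'⟩ := hc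
    obtain ⟨p, hp, hpmax⟩ := G.verts.exists_max_image (fun u => u 0) G.nonempty
    obtain ⟨q, hq, hqmin⟩ := G.verts.exists_min_image (fun u => u 0) G.nonempty
    have hqp : q 0 < p 0 := by
      rcases lt_or_ge (q 0) (p 0) with h' | h'
      · exact h'
      · exact absurd (le_antisymm (by linarith [hpmax w hw, hqmin w' hw'])
          (by linarith [hpmax w' hw', hqmin w hw])) hww'
    have hpu : G.Unbalanced p :=
      ⟨hp, not_balanced_of_max G p 1 0 (by simp) (fun u hu => by simpa using hpmax u hu)⟩
    have hqu : G.Unbalanced q :=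
      ⟨hq, not_balanced_of_max G q (-1) 0 (by simp) (fun u hu => by
        have := hqmin u hu; simp only; linarith)⟩
    have hSfin : ({u | G.Unbalanced u} : Set (EuclideanSpace ℝ (Fin 2))).Finite :=
      Set.Finite.subset G.verts.finite_toSet (fun u hu => hu.1)
    have hpq : p ≠ q := fun h' => absurd (congrArg (fun x => x 0) h') (ne_of_gt hqp)
    have hmem2 : ∀ r, G.Unbalanced r → r = p ∨ r = q := by
      intro r hr
      by_contra hrc
      push_neg at hrc
      have hsub : ({p, q, r} : Set (EuclideanSpace ℝ (Fin 2))) ⊆ {u | G.Unbalanced u} := by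
        intro x hx
        rcases hx with rfl | rfl | rfl
        · exact hpu
        · exact hqu
        · exact hr
      have h3 : ({p, q, r} : Set (EuclideanSpace ℝ (Fin 2))).ncard = 3 := by
        rw [Set.ncard_insert_of_notMem (by simp [hpq, Ne.symm hrc.1]),
          Set.ncard_insert_of_notMem (by simp [Ne.symm hrc.2]), Set.ncard_singleton]
      have := Set.ncard_le_ncard hsub hSfin
      omega
    -- the orthogonal functional g x = a2 * x 0 + b2 * x 1 is constant on verts
    set a2 : ℝ := p 1 - q 1 with ha2
    set b2 : ℝ := q 0 - p 0 with hb2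
    have hb2ne : b2 ≠ 0 := by rw [hb2]; intro h'; linarith
    have habne : ¬(a2 = 0 ∧ b2 = 0) := fun h' => hb2ne h'.2
    have hgpq : a2 * p 0 + b2 * p 1 = a2 * q 0 + b2 * q 1 := by rw [ha2, hb2]; ring
    have hgconst : ∀ u ∈ G.verts, a2 * u 0 + b2 * u 1 = a2 * p 0 + b2 * p 1 := by
      obtain ⟨r, hr, hrmax⟩ := G.verts.exists_max_image (fun u => a2 * u 0 + b2 * u 1) G.nonempty
      obtain ⟨r', hr', hrmin⟩ := G.verts.exists_min_image (fun u => a2 * u 0 + b2 * u 1) G.nonempty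
      have hru : G.Unbalanced r := ⟨hr, not_balanced_of_max G r a2 b2 habne hrmax⟩
      have hru' : G.Unbalanced r' := ⟨hr', not_balanced_of_max G r' (-a2) (-b2)
        (fun h' => hb2ne (by linarith [h'.2])) (fun u hu => by
          have := hrmin u hu; simp only; linarith)⟩
      have hgr : a2 * r 0 + b2 * r 1 = a2 * p 0 + b2 * p 1 := by
        rcases hmem2 r hru with rfl | rfl
        · rfl
        · exact hgpq.symm
      have hgr' : a2 * r' 0 + b2 * r' 1 = a2 * p 0 + b2 * p 1 := by
        rcases hmem2 r' hru' with rfl | rfl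
        · rfl
        · exact hgpq.symm
      intro u hu
      have := hrmax u hu
      have := hrmin u hu
      simp only at *
      linarith
    have := nbhd_card_le_two G v a2 b2 habne ?_
    · omega
    · intro u hu
      have h1 := hgconst u (hmemn u hu).1
      have h2 := hgconst v hv
      linarith
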